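/- Let λ ∈ (0, 1/2), Γ ≥ 0, let P be a non-discrete probability measure on ℝ with atom set Ē = {x : P({x}) > 0}, and let n be a positive integer with P(Ē)^n ≤ λ/2. Suppose there exists an (n, M, λ/2) deterministic message transmission feedback code for the channel W_P with peak power constraint Γ, where M > 2/λ. Then for every positive integer N there exists a (2n, N, λ, λ) deterministic identification feedback code for W_P with peak power constraint Γ. -/

import Mathlib

open MeasureTheory

noncomputable section

/-- A feedback encoding function of length `n`: the `t`-th component maps the
previous `t` channel outputs to the next channel input. -/
def FeedbackFn (n : ℕ) := (t : Fin n) → (Fin (t : ℕ) → ℝ) → ℝ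

/-- All components of the feedback encoding function are measurable. -/
def FeedbackFn.Meas {n : ℕ} (f : FeedbackFn n) : Prop := ∀ t, Measurable (f t)

/-- The output sequence: yₜ = fᵗ(y₁,…,y_{t−1}) + zₜ. -/
def outSeq {n : ℕ} (f : FeedbackFn n) (z : Fin n → ℝ) : Fin n → ℝ
  | t => f t (fun s => outSeq f z ⟨s.1, s.2.trans t.2⟩) + z t
termination_by t => (t : ℕ)

/-- Output distribution `W_P^n(·|f)` of the additive-noise channel with noise law `P`
under the feedback encoding function `f`: the pushforward of `P^⊗n` under `outSeq f`. -/
def Wn {n : ℕ} (P : Measure ℝ) (f : FeedbackFn n) : Measure (Fin n → ℝ) :=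
  (Measure.pi fun _ : Fin n => P).map (outSeq f)

/-- Average power constraint `Γ`. -/
def AvgPower {n : ℕ} (f : FeedbackFn n) (Γ : ℝ) : Prop :=
  ∀ y : Fin n → ℝ, ∑ t : Fin n, (f t fun s => y ⟨s.1, s.2.trans t.2⟩) ^ 2 ≤ n * Γ

/-- Peak power constraint `Γ`. -/
def PeakPower {n : ℕ} (f : FeedbackFn n) (Γ : ℝ) : Prop :=
  ∀ (t : Fin n) (y : Fin (t : ℕ) → ℝ), |f t y| ≤ Γ

/-- An `(n, N, λ₁, λ₂)` deterministic identification feedback code for `W_P`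
with peak power constraint `Γ`. -/
def IsIDCodePeak (P : Measure ℝ) (n N : ℕ) (lam₁ lam₂ Γ : ℝ)
    (f : Fin N → FeedbackFn n) (D : Fin N → Set (Fin n → ℝ)) : Prop :=
  (∀ i, (f i).Meas ∧ PeakPower (f i) Γ ∧ MeasurableSet (D i)) ∧
  (∀ i, Wn P (f i) (D i)ᶜ ≤ ENNReal.ofReal lam₁) ∧
  (∀ i j, i ≠ j → Wn P (f i) (D j) ≤ ENNReal.ofReal lam₂)

/-- An `(n, M, λ)` deterministic message transmission feedback code for `W_P`
with peak power constraint `Γ`. -/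
def IsMTCodePeak (P : Measure ℝ) (n M : ℕ) (lam Γ : ℝ)
    (f : Fin M → FeedbackFn n) (D : Fin M → Set (Fin n → ℝ)) : Prop :=
  (∀ i, (f i).Meas ∧ PeakPower (f i) Γ ∧ MeasurableSet (D i)) ∧
  (∀ i j, i ≠ j → Disjoint (D i) (D j)) ∧
  (∀ i, Wn P (f i) (D i)ᶜ ≤ ENNReal.ofReal lam)

/-- `W_P` has positive message transmission feedback capacity with peak power
constraint `Γ`. -/
def PosCapPeak (P : Measure ℝ) (Γ : ℝ) : Prop :=
  ∃ R : ℝ, 0 < R ∧ ∀ lam δ : ℝ, 0 < lam → 0 < δ → ∃ n₀ : ℕ, ∀ n : ℕ, n₀ ≤ n →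
    ∃ M : ℕ, 0 < M ∧ (∃ f D, IsMTCodePeak P n M lam Γ f D) ∧
      R - δ ≤ Real.logb 2 M / n

/-! ### Auxiliary lemmas -/

section Aux

open Set Filter

lemma outSeq_eq {n : ℕ} (f : FeedbackFn n) (z : Fin n → ℝ) (t : Fin n) :
    outSeq f z t = f t (fun s => outSeq f z ⟨s.1, s.2.trans t.2⟩) + z t := by
  rw [outSeq]

lemma measurable_outSeq_coord {n : ℕ} {f : FeedbackFn n} (hf : f.Meas) :
    ∀ (k : ℕ) (t : Fin n), (t : ℕ) < k → Measurable fun z => outSeq f z t := by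
  intro k
  induction k with
  | zero => exact fun t ht => absurd ht (Nat.not_lt_zero _)
  | succ k ih =>
    intro t ht
    have he : (fun z => outSeq f z t) =
        fun z => f t (fun s => outSeq f z ⟨s.1, s.2.trans t.2⟩) + z t := by
      funext z; rw [outSeq]
    rw [he]
    refine Measurable.add ?_ (measurable_pi_apply t)
    exact (hf t).comp (measurable_pi_lambda _ fun s =>
      ih ⟨s.1, s.2.trans t.2⟩ (lt_of_lt_of_le s.2 (Nat.lt_succ_iff.mp ht)))

lemma measurable_outSeq {n : ℕ} {f : FeedbackFn n} (hf : f.Meas) : Measurable (outSeq f) :=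
  measurable_pi_lambda _ fun t => measurable_outSeq_coord hf n t t.2

lemma isProbabilityMeasure_Wn {n : ℕ} (P : Measure ℝ) [IsProbabilityMeasure P]
    {f : FeedbackFn n} (hf : f.Meas) : IsProbabilityMeasure (Wn P f) :=
  Measure.isProbabilityMeasure_map (measurable_outSeq hf).aemeasurable

lemma measurable_cases {α β : Type*} [MeasurableSpace α] [MeasurableSpace β] {M : ℕ}
    {κ : α → Fin M} (hκ : Measurable κ) {h : Fin M → α → β} (hh : ∀ k, Measurable (h k)) :
    Measurable fun a => h (κ a) a := by
  intro s hs
  have : (fun a => h (κ a) a) ⁻¹' s = ⋃ k, (κ ⁻¹' {k}) ∩ ((h k) ⁻¹' s) := by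
    ext a
    simp only [Set.mem_preimage, Set.mem_iUnion, Set.mem_inter_iff, Set.mem_singleton_iff]
    constructor
    · exact fun ha => ⟨κ a, rfl, ha⟩
    · rintro ⟨k, hk, ha⟩; rwa [hk]
  rw [this]
  exact MeasurableSet.iUnion fun k =>
    (hκ (measurableSet_singleton k)).inter (hh k hs)

/-! #### Splitting a block of length `2n` into two blocks of length `n` -/

def splitFun (n : ℕ) (z : Fin (2 * n) → ℝ) : (Fin n → ℝ) × (Fin n → ℝ) :=
  (fun s => z ⟨s.1, by omega⟩, fun s => z ⟨n + s.1, by omega⟩)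

lemma measurePreserving_splitFun (n : ℕ) (P : Measure ℝ) [IsProbabilityMeasure P] :
    MeasurePreserving (splitFun n) (Measure.pi fun _ : Fin (2 * n) => P)
      ((Measure.pi fun _ : Fin n => P).prod (Measure.pi fun _ : Fin n => P)) := by
  set F : Fin n ⊕ Fin n ≃ Fin (2 * n) := finSumFinEquiv.trans (finCongr (two_mul n).symm) with hF
  have h1 : MeasurePreserving
      ((MeasurableEquiv.piCongrLeft (fun _ : Fin (2 * n) => ℝ) F).symm)
      (Measure.pi fun _ : Fin (2 * n) => P) (Measure.pi fun _ : Fin n ⊕ Fin n => P) :=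
    (measurePreserving_piCongrLeft (fun _ : Fin (2 * n) => P) F).symm _
  have h2 : MeasurePreserving (MeasurableEquiv.sumPiEquivProdPi (fun _ : Fin n ⊕ Fin n => ℝ))
      (Measure.pi fun _ : Fin n ⊕ Fin n => P)
      ((Measure.pi fun _ : Fin n => P).prod (Measure.pi fun _ : Fin n => P)) :=
    measurePreserving_sumPiEquivProdPi (fun _ : Fin n ⊕ Fin n => P)
  have h3 := h2.comp h1
  have he : (⇑(MeasurableEquiv.sumPiEquivProdPi (fun _ : Fin n ⊕ Fin n => ℝ)) ∘
      ⇑(MeasurableEquiv.piCongrLeft (fun _ : Fin (2 * n) => ℝ) F).symm) = splitFun n := by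
    funext z
    have hcoe : ∀ (i' : Fin n ⊕ Fin n),
        ((MeasurableEquiv.piCongrLeft (fun _ : Fin (2 * n) => ℝ) F).symm z) i' = z (F i') :=
      fun i' => Equiv.piCongrLeft_symm_apply _ _ _ _
    have hl : ∀ s : Fin n, F (Sum.inl s) = (⟨s.1, by omega⟩ : Fin (2 * n)) := by
      intro s; ext; simp [hF]
    have hr : ∀ s : Fin n, F (Sum.inr s) = (⟨n + s.1, by omega⟩ : Fin (2 * n)) := by
      intro s; ext; simp [hF]; omega
    show (MeasurableEquiv.sumPiEquivProdPi (fun _ : Fin n ⊕ Fin n => ℝ))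
        ((MeasurableEquiv.piCongrLeft (fun _ : Fin (2 * n) => ℝ) F).symm z) = splitFun n z
    ext s
    · show ((MeasurableEquiv.piCongrLeft (fun _ : Fin (2 * n) => ℝ) F).symm z) (Sum.inl s)
        = (splitFun n z).1 s
      rw [hcoe, hl]; rfl
    · show ((MeasurableEquiv.piCongrLeft (fun _ : Fin (2 * n) => ℝ) F).symm z) (Sum.inr s)
        = (splitFun n z).2 s
      rw [hcoe, hr]; rfl
  rw [he] at h3
  exact h3

/-! #### The combined two-block encoder -/

def comb (n M : ℕ) (g : Fin M → FeedbackFn n) (T : (Fin n → ℝ) → Fin M) : FeedbackFn (2 * n) :=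
  fun t y =>
    if h : (t : ℕ) < n then 0
    else
      g (T fun s : Fin n => y ⟨s.1, lt_of_lt_of_le s.2 (Nat.le_of_not_lt h)⟩)
        ⟨(t : ℕ) - n, by have h2 := t.2; omega⟩
        (fun s => y ⟨n + s.1, by have hs : (s : ℕ) < (t : ℕ) - n := s.2; omega⟩)

lemma outSeq_comb {n M : ℕ} (g : Fin M → FeedbackFn n) (T : (Fin n → ℝ) → Fin M)
    (z : Fin (2 * n) → ℝ) :
    ∀ (k : ℕ) (t : Fin (2 * n)), (t : ℕ) < k →
      outSeq (comb n M g T) z t =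
        if h : (t : ℕ) < n then z t
        else outSeq (g (T (splitFun n z).1)) (splitFun n z).2
          ⟨(t : ℕ) - n, by have h2 := t.2; omega⟩ := by
  intro k
  induction k with
  | zero => exact fun t ht => absurd ht (Nat.not_lt_zero _)
  | succ k ih =>
    intro t ht
    have htk : (t : ℕ) ≤ k := Nat.lt_succ_iff.mp ht
    rw [outSeq_eq]
    by_cases h : (t : ℕ) < n
    · rw [dif_pos h]
      simp only [comb, dif_pos h, zero_add]
    · rw [dif_neg h]
      have hn : n ≤ (t : ℕ) := Nat.le_of_not_lt h
      have hfirst : ∀ (j : Fin (2 * n)), (j : ℕ) < n →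
          outSeq (comb n M g T) z j = z j := by
        intro j hj
        rw [ih j (by omega), dif_pos hj]
      have hsecond : ∀ (j : Fin (2 * n)) (hj : n ≤ (j : ℕ)), (j : ℕ) < k →
          outSeq (comb n M g T) z j
            = outSeq (g (T (splitFun n z).1)) (splitFun n z).2
              ⟨(j : ℕ) - n, by have h2 := j.2; omega⟩ := by
        intro j hj hjk
        rw [ih j (by omega), dif_neg (by omega)]
      simp only [comb, dif_neg h]
      rw [outSeq_eq]
      have hA : (fun s : Fin n =>
          (fun s' : Fin (t : ℕ) => outSeq (comb n M g T) z ⟨s'.1, s'.2.trans t.2⟩)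
            ⟨s.1, lt_of_lt_of_le s.2 hn⟩) = (splitFun n z).1 := by
        funext s
        exact hfirst ⟨s.1, by omega⟩ s.2
      rw [hA]
      congr 1
      · refine congrArg (g _ _) (funext fun s => ?_)
        have hs : (s : ℕ) < (t : ℕ) - n := s.2
        refine (hsecond ⟨n + s.1, by omega⟩ (show n ≤ n + (s : ℕ) from by omega)
          (show n + (s : ℕ) < k from by omega)).trans
          (congrArg (outSeq _ _) (Fin.ext ?_))
        simp
      · exact (congrArg z (Fin.ext (by simp; omega))).symm

lemma split_outSeq_comb {n M : ℕ} (g : Fin M → FeedbackFn n) (T : (Fin n → ℝ) → Fin M)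
    (z : Fin (2 * n) → ℝ) :
    splitFun n (outSeq (comb n M g T) z)
      = ((splitFun n z).1, outSeq (g (T (splitFun n z).1)) (splitFun n z).2) := by
  have key := outSeq_comb g T z (2 * n)
  refine Prod.ext ?_ ?_
  · funext s
    show outSeq (comb n M g T) z ⟨s.1, _⟩ = (splitFun n z).1 s
    rw [key ⟨s.1, by omega⟩ (by omega), dif_pos s.2]
    rfl
  · funext s
    show outSeq (comb n M g T) z ⟨n + s.1, _⟩ = _
    rw [key ⟨n + s.1, by omega⟩ (show n + (s : ℕ) < 2 * n from by omega),
      dif_neg (show ¬(n + (s : ℕ) < n) from by omega)]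
    exact congrArg (outSeq _ _) (Fin.ext (by simp))

lemma comb_meas {n M : ℕ} {g : Fin M → FeedbackFn n} (hg : ∀ k, (g k).Meas)
    {T : (Fin n → ℝ) → Fin M} (hT : Measurable T) : (comb n M g T).Meas := by
  intro t
  show Measurable (fun y => comb n M g T t y)
  by_cases h : (t : ℕ) < n
  · simp only [comb, dif_pos h]
    exact measurable_const
  · simp only [comb, dif_neg h]
    have h0 : Measurable fun (y : Fin (t : ℕ) → ℝ) =>
        (fun s : Fin n => y ⟨s.1, lt_of_lt_of_le s.2 (Nat.le_of_not_lt h)⟩) :=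
      measurable_pi_lambda _ fun s => measurable_pi_apply _
    have h2 : Measurable fun (y : Fin (t : ℕ) → ℝ) =>
        (fun s : Fin ((t : ℕ) - n) =>
          y ⟨n + s.1, by have hs : (s : ℕ) < (t : ℕ) - n := s.2; omega⟩) :=
      measurable_pi_lambda _ fun s => measurable_pi_apply _
    refine measurable_cases (h := fun k (y : Fin (t : ℕ) → ℝ) =>
        g k ⟨(t : ℕ) - n, by have h2 := t.2; omega⟩
          (fun s : Fin ((t : ℕ) - n) =>
            y ⟨n + s.1, by have hs : (s : ℕ) < (t : ℕ) - n := s.2; omega⟩))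
      (hT.comp h0) (fun k => ?_)
    exact Measurable.comp (f := fun (y : Fin (t : ℕ) → ℝ) =>
        (fun s : Fin ((t : ℕ) - n) =>
          y ⟨n + s.1, by have hs : (s : ℕ) < (t : ℕ) - n := s.2; omega⟩))
      (hg k ⟨(t : ℕ) - n, by have h2 := t.2; omega⟩) h2

lemma comb_peak {n M : ℕ} {g : Fin M → FeedbackFn n} {Γ : ℝ}
    (hgp : ∀ k, PeakPower (g k) Γ) (hΓ : 0 ≤ Γ) (T : (Fin n → ℝ) → Fin M) :
    PeakPower (comb n M g T) Γ := by
  intro t y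
  simp only [comb]
  split_ifs with h
  · simpa using hΓ
  · exact hgp _ _ _

lemma Wn_comb_apply (P : Measure ℝ) [IsProbabilityMeasure P] {n M : ℕ}
    {g : Fin M → FeedbackFn n} (hg : ∀ k, (g k).Meas)
    {T : (Fin n → ℝ) → Fin M} (hT : Measurable T)
    {D' : Set ((Fin n → ℝ) × (Fin n → ℝ))} (hD' : MeasurableSet D') :
    Wn P (comb n M g T) (splitFun n ⁻¹' D')
      = ∫⁻ z1, (Measure.pi fun _ : Fin n => P)
          {z2 | (z1, outSeq (g (T z1)) z2) ∈ D'} ∂(Measure.pi fun _ : Fin n => P) := by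
  have hΦ : Measurable (fun p : (Fin n → ℝ) × (Fin n → ℝ) => (p.1, outSeq (g (T p.1)) p.2)) :=
    measurable_fst.prodMk (measurable_cases (hT.comp measurable_fst)
      (fun k => (measurable_outSeq (hg k)).comp measurable_snd))
  rw [Wn, Measure.map_apply (measurable_outSeq (comb_meas hg hT))
    ((measurePreserving_splitFun n P).measurable hD')]
  have hsets : (outSeq (comb n M g T)) ⁻¹' (splitFun n ⁻¹' D')
      = splitFun n ⁻¹' ((fun p : (Fin n → ℝ) × (Fin n → ℝ) =>
          (p.1, outSeq (g (T p.1)) p.2)) ⁻¹' D') := by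
    ext z
    simp only [Set.mem_preimage]
    rw [split_outSeq_comb]
  rw [hsets, (measurePreserving_splitFun n P).measure_preimage (hΦ hD').nullMeasurableSet,
    Measure.prod_apply (hΦ hD')]
  rfl

/-! #### The cdf of an atomless probability measure on `ℝ` -/

lemma continuous_cdf_of_noAtoms (ν : Measure ℝ) [IsProbabilityMeasure ν] [NullSingletonClass ν] :
    Continuous (ProbabilityTheory.cdf ν) := by
  rw [continuous_iff_continuousAt]
  intro x
  rw [(ProbabilityTheory.cdf ν).mono.continuousAt_iff_leftLim_eq_rightLim,
    StieltjesFunction.rightLim_eq]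
  have h0 : (ProbabilityTheory.cdf ν).measure {x} = 0 := by
    rw [ProbabilityTheory.measure_cdf]; exact measure_singleton x
  rw [StieltjesFunction.measure_singleton, ENNReal.ofReal_eq_zero] at h0
  have h1 := (ProbabilityTheory.cdf ν).mono.leftLim_le (le_refl x)
  linarith

lemma meas_cdf_le (ν : Measure ℝ) [IsProbabilityMeasure ν] [NullSingletonClass ν] {t : ℝ} (ht : t < 1) :
    ν {y | ProbabilityTheory.cdf ν y ≤ t} ≤ ENNReal.ofReal t := by
  set F := ProbabilityTheory.cdf ν with hFdef
  rcases eq_empty_or_nonempty {y | F y ≤ t} with hW | hW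
  · rw [hW]; simp
  · have hclosed : IsClosed {y | F y ≤ t} :=
      IsClosed.preimage (continuous_cdf_of_noAtoms ν) isClosed_Iic
    have hbdd : BddAbove {y | F y ≤ t} := by
      obtain ⟨b, hb⟩ := eventually_atTop.mp
        ((ProbabilityTheory.tendsto_cdf_atTop ν).eventually_const_lt ht)
      refine ⟨b, fun y hy => ?_⟩
      by_contra hyb
      exact absurd hy (not_le.mpr (hb y (le_of_not_ge hyb)))
    have hmem := hclosed.csSup_mem hW hbdd
    calc ν {y | F y ≤ t} ≤ ν (Iic (sSup {y | F y ≤ t})) :=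
          measure_mono (fun y hy => le_csSup hbdd hy)
      _ = ENNReal.ofReal (F (sSup {y | F y ≤ t})) := (ProbabilityTheory.ofReal_cdf ν _).symm
      _ ≤ ENNReal.ofReal t := ENNReal.ofReal_le_ofReal hmem

lemma exists_cdf_eq (ν : Measure ℝ) [IsProbabilityMeasure ν] [NullSingletonClass ν] {t : ℝ}
    (h0 : 0 < t) (h1 : t < 1) : ∃ x, ProbabilityTheory.cdf ν x = t := by
  set F := ProbabilityTheory.cdf ν with hFdef
  obtain ⟨a, ha⟩ := ((ProbabilityTheory.tendsto_cdf_atBot ν).eventually_lt_const h0).exists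
  obtain ⟨b, hb⟩ := ((ProbabilityTheory.tendsto_cdf_atTop ν).eventually_const_lt h1).exists
  have hab : a ≤ b := by
    by_contra hba
    have := (ProbabilityTheory.cdf ν).mono (le_of_not_ge hba)
    have : F b ≤ F a := this
    linarith
  obtain ⟨x, -, hx⟩ := intermediate_value_Icc hab
    ((continuous_cdf_of_noAtoms ν).continuousOn) (mem_Icc.mpr ⟨ha.le, hb.le⟩)
  exact ⟨x, hx⟩

lemma exists_partition_real (ν : Measure ℝ) [IsProbabilityMeasure ν] [NullSingletonClass ν]
    (m : ℕ) (hm : 0 < m) :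
    ∃ C : Fin m → Set ℝ, (∀ k, MeasurableSet (C k)) ∧
      Pairwise (Function.onFun Disjoint C) ∧ (⋃ k, C k) = Set.univ ∧
      ∀ k, ν (C k) ≤ ENNReal.ofReal (1 / m) := by
  classical
  set F := ProbabilityTheory.cdf ν with hFdef
  set V : ℕ → Set ℝ := fun k => if k = 0 then ∅ else if m ≤ k then univ
    else {y | F y ≤ (k : ℝ) / m} with hV
  have hmono : ∀ k l : ℕ, k ≤ l → V k ⊆ V l := by
    intro k l hkl
    by_cases hk0 : k = 0
    · simp [hV, hk0]
    have hl0 : l ≠ 0 := by omega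
    by_cases hlm : m ≤ l
    · simp [hV, hl0, hlm]
    · have hkm : ¬ m ≤ k := by omega
      simp only [hV, if_neg hk0, if_neg hl0, if_neg hkm, if_neg hlm]
      intro y hy
      simp only [mem_setOf_eq] at *
      exact hy.trans ((div_le_div_iff_of_pos_right (by exact_mod_cast hm)).mpr
        (by exact_mod_cast hkl))
  have hVmeas : ∀ k, MeasurableSet (V k) := by
    intro k
    simp only [hV]
    split_ifs
    · exact MeasurableSet.empty
    · exact MeasurableSet.univ
    · exact measurableSet_le ((continuous_cdf_of_noAtoms ν).measurable) measurable_const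
  have hupper : ∀ k : ℕ, ν (V k) ≤ ENNReal.ofReal ((k : ℝ) / m) := by
    intro k
    by_cases hk0 : k = 0
    · simp [hV, hk0]
    by_cases hkm : m ≤ k
    · simp only [hV, if_neg hk0, if_pos hkm, measure_univ]
      rw [(show (1 : ENNReal) = ENNReal.ofReal 1 from by simp)]
      apply ENNReal.ofReal_le_ofReal
      rw [le_div_iff₀ (by exact_mod_cast hm)]
      simp only [one_mul]
      exact_mod_cast hkm
    · simp only [hV, if_neg hk0, if_neg hkm]
      exact meas_cdf_le ν (by
        rw [div_lt_one (by exact_mod_cast hm)]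
        exact_mod_cast Nat.lt_of_not_le hkm)
  have hlower : ∀ k : ℕ, k ≤ m → ENNReal.ofReal ((k : ℝ) / m) ≤ ν (V k) := by
    intro k hkm
    by_cases hk0 : k = 0
    · simp [hk0]
    by_cases hkm' : m ≤ k
    · have : (k : ℝ) / m ≤ 1 := by
        rw [div_le_one (by exact_mod_cast hm)]
        exact_mod_cast hkm
      calc ENNReal.ofReal ((k : ℝ) / m) ≤ ENNReal.ofReal 1 := ENNReal.ofReal_le_ofReal this
        _ = 1 := by simp
        _ = ν (V k) := by simp [hV, if_neg hk0, if_pos hkm']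
    · obtain ⟨x, hx⟩ := exists_cdf_eq ν (t := (k : ℝ) / m)
        (by positivity)
        (by rw [div_lt_one (by exact_mod_cast hm)]; exact_mod_cast Nat.lt_of_not_le hkm')
      have hsub : Iic x ⊆ V k := by
        simp only [hV, if_neg hk0, if_neg hkm']
        intro y hy
        simp only [mem_setOf_eq]
        rw [← hx]
        exact (ProbabilityTheory.cdf ν).mono hy
      calc ENNReal.ofReal ((k : ℝ) / m) = ν (Iic x) := by
            rw [← ProbabilityTheory.ofReal_cdf ν x, hx]
        _ ≤ ν (V k) := measure_mono hsub
  refine ⟨fun k => V (k.1 + 1) \ V k.1, fun k => (hVmeas _).diff (hVmeas _), ?_, ?_, ?_⟩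
  · intro k l hkl
    rcases lt_or_gt_of_ne (fun h => hkl (Fin.ext (by exact_mod_cast congrArg Fin.val h))) with h | h
    · exact Set.disjoint_left.mpr fun y hy hy' =>
        hy'.2 (hmono _ _ (by omega) hy.1)
    · exact Set.disjoint_right.mpr fun y hy hy' =>
        hy'.2 (hmono _ _ (by omega) hy.1)
  · apply eq_univ_of_forall
    intro y
    have hex : ∃ k : ℕ, y ∈ V (k + 1) := ⟨m - 1, by
      have : m - 1 + 1 = m := by omega
      rw [this]
      simp [hV, Nat.pos_iff_ne_zero.mp hm]⟩
    have hk0m : Nat.find hex ≤ m - 1 := Nat.find_le (by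
      have : m - 1 + 1 = m := by omega
      rw [this]
      simp [hV, Nat.pos_iff_ne_zero.mp hm])
    refine mem_iUnion.mpr ⟨⟨Nat.find hex, by omega⟩, Nat.find_spec hex, ?_⟩
    rcases Nat.eq_zero_or_pos (Nat.find hex) with h0 | h0
    · simp only [h0]
      simp [hV]
    · have hmin := Nat.find_min hex (m := Nat.find hex - 1) (by omega)
      intro hcon
      exact hmin (by
        have hrw : Nat.find hex - 1 + 1 = Nat.find hex := by omega
        rw [hrw]
        exact hcon)
  · intro k
    have hdiff : ν (V (k.1 + 1) \ V k.1) = ν (V (k.1 + 1)) - ν (V k.1) :=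
      measure_diff (hmono _ _ (by omega)) (hVmeas _).nullMeasurableSet (measure_ne_top ν _)
    rw [hdiff]
    calc ν (V (k.1 + 1)) - ν (V k.1)
        ≤ ENNReal.ofReal (((k.1 : ℝ) + 1) / m) - ENNReal.ofReal ((k.1 : ℝ) / m) := by
          apply tsub_le_tsub
          · exact_mod_cast hupper (k.1 + 1)
          · exact hlower k.1 (by omega)
      _ = ENNReal.ofReal (((k.1 : ℝ) + 1) / m - (k.1 : ℝ) / m) := by
          rw [ENNReal.ofReal_sub]
          positivity
      _ = ENNReal.ofReal (1 / m) := by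
          rw [div_sub_div_same]
          ring_nf

/-! #### The coloring lemma -/

lemma coloring (P : Measure ℝ) [IsProbabilityMeasure P] (n : ℕ) (hn : 0 < n)
    (S : Set (Fin n → ℝ)) (hSm : MeasurableSet S)
    (hS0 : ∀ z ∈ S, (Measure.pi fun _ : Fin n => P) {z} = 0)
    (N M : ℕ) (hM : 0 < M) :
    ∃ T : Fin N → (Fin n → ℝ) → Fin M, (∀ i, Measurable (T i)) ∧
      ∀ i j : Fin N, i ≠ j → (Measure.pi fun _ : Fin n => P) (S ∩ {z | T i z = T j z})
        ≤ ENNReal.ofReal (1 / M) := by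
  classical
  set μ : Measure (Fin n → ℝ) := Measure.pi fun _ : Fin n => P with hμ
  haveI : IsProbabilityMeasure μ := by rw [hμ]; infer_instance
  set c : ENNReal := μ S with hc
  by_cases hc0 : c = 0
  · refine ⟨fun _ _ => ⟨0, hM⟩, fun _ => measurable_const, fun i j hij => ?_⟩
    calc μ (S ∩ _) ≤ μ S := measure_mono inter_subset_left
      _ = 0 := hc0
      _ ≤ _ := zero_le
  have hnc : ¬Countable (Fin n → ℝ) := by
    have hinj : Function.Injective (fun r : ℝ => (fun _ : Fin n => r)) := by
      intro a b h; exact congrFun h ⟨0, hn⟩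
    have : Uncountable (Fin n → ℝ) := hinj.uncountable
    exact not_countable
  have hncR : ¬Countable ℝ := not_countable
  set e : (Fin n → ℝ) ≃ᵐ ℝ := PolishSpace.measurableEquivOfNotCountable hnc hncR with he
  set ν : Measure ℝ := c⁻¹ • ((μ.restrict S).map e) with hν
  have hcne : c ≠ ⊤ := measure_ne_top μ S
  have hmapS : ∀ B : Set ℝ, MeasurableSet B → ((μ.restrict S).map e) B = μ (e ⁻¹' B ∩ S) := by
    intro B hB
    rw [Measure.map_apply e.measurable hB, Measure.restrict_apply (e.measurable hB)]
  haveI : IsProbabilityMeasure ν := by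
    constructor
    rw [hν, Measure.smul_apply, hmapS _ MeasurableSet.univ]
    simp only [Set.preimage_univ, Set.univ_inter, smul_eq_mul]
    exact ENNReal.inv_mul_cancel hc0 hcne
  haveI : NullSingletonClass ν := by
    constructor
    intro x
    rw [hν, Measure.smul_apply, hmapS _ (measurableSet_singleton x)]
    have hpre : e ⁻¹' {x} = {e.symm x} := by
      ext y
      simp only [mem_preimage, mem_singleton_iff]
      constructor
      · intro hy; rw [← hy, MeasurableEquiv.symm_apply_apply]
      · intro hy; rw [hy, MeasurableEquiv.apply_symm_apply]
    rw [hpre]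
    by_cases hmem : e.symm x ∈ S
    · have h1 : μ ({e.symm x} ∩ S) ≤ μ {e.symm x} := measure_mono inter_subset_left
      rw [hS0 _ hmem] at h1
      simp only [smul_eq_mul]
      rw [le_antisymm h1 zero_le, mul_zero]
    · rw [Set.singleton_inter_eq_empty.mpr hmem]
      simp
  obtain ⟨C, hCmeas, hCdisj, hCcover, hCbound⟩ := exists_partition_real ν (M ^ N) (pow_pos hM N)
  set eqv : (Fin N → Fin M) ≃ Fin (M ^ N) := Fintype.equivFinOfCardEq (by simp) with heqv
  have hexists : ∀ y : ℝ, ∃ k, y ∈ C k := by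
    intro y
    exact mem_iUnion.mp (hCcover ▸ mem_univ y)
  set pick : ℝ → Fin (M ^ N) := fun y => (hexists y).choose with hpick
  have hpick_mem : ∀ y, y ∈ C (pick y) := fun y => (hexists y).choose_spec
  have hpick_eq : ∀ y k, y ∈ C k → pick y = k := by
    intro y k hy
    by_contra hne
    exact (Set.disjoint_left.mp (hCdisj hne)) (hpick_mem y) hy
  have hpre_pick : ∀ k, pick ⁻¹' {k} = C k := by
    intro k; ext y
    simp only [mem_preimage, mem_singleton_iff]
    exact ⟨fun h => h ▸ hpick_mem y, fun h => hpick_eq y k h⟩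
  have hpick_meas : Measurable pick :=
    measurable_to_countable' fun k => by rw [hpre_pick]; exact hCmeas k
  refine ⟨fun i z => eqv.symm (pick (e z)) i,
    fun i => (measurable_of_countable (fun k : Fin (M ^ N) => eqv.symm k i)).comp
      (hpick_meas.comp e.measurable), ?_⟩
  intro i j hij
  have hN1 : 0 < N := i.pos
  set K : Finset (Fin (M ^ N)) :=
    Finset.univ.filter (fun k => eqv.symm k i = eqv.symm k j) with hK
  have hKm : MeasurableSet (pick ⁻¹' (K : Set (Fin (M ^ N)))) :=
    hpick_meas ((K : Set (Fin (M ^ N))).toFinite.measurableSet)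
  have hset : S ∩ {z | eqv.symm (pick (e z)) i = eqv.symm (pick (e z)) j}
      = e ⁻¹' (pick ⁻¹' (K : Set (Fin (M ^ N)))) ∩ S := by
    ext z
    simp only [hK, mem_inter_iff, mem_setOf_eq, mem_preimage, Finset.coe_filter,
      Finset.mem_univ, true_and]
    tauto
  rw [hset, ← Measure.restrict_apply (e.measurable hKm),
    ← Measure.map_apply e.measurable hKm]
  have hmap : (μ.restrict S).map e = c • ν := by
    rw [hν, smul_smul, ENNReal.mul_inv_cancel hc0 hcne, one_smul]
  rw [hmap, Measure.smul_apply, smul_eq_mul]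
  have hpickK : pick ⁻¹' (K : Set (Fin (M ^ N))) = ⋃ k ∈ K, C k := by
    ext y
    simp only [mem_preimage, Finset.mem_coe, mem_iUnion, exists_prop]
    constructor
    · intro h; exact ⟨pick y, h, hpick_mem y⟩
    · rintro ⟨k, hk, hy⟩; rwa [hpick_eq y k hy]
  have hcard : K.card ≤ M ^ (N - 1) := by
    have hinj : Set.InjOn (fun k => fun x : {x : Fin N // x ≠ j} => eqv.symm k x.1) K := by
      intro k1 hk1 k2 hk2 hfeq
      simp only [hK, Finset.coe_filter, mem_setOf_eq, Finset.mem_univ, true_and] at hk1 hk2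
      apply eqv.symm.injective
      funext x
      by_cases hxj : x = j
      · subst hxj
        have h1 := congrFun hfeq ⟨i, hij⟩
        simp only at h1
        rw [← hk1, h1, hk2]
      · exact congrFun hfeq ⟨x, hxj⟩
    have hle := Finset.card_le_card_of_injOn _ (fun k _ => Finset.mem_univ _) hinj
    refine hle.trans ?_
    rw [Finset.card_univ, Fintype.card_fun, Fintype.card_subtype_compl, Fintype.card_subtype_eq]
    simp
  calc c * ν (pick ⁻¹' (K : Set (Fin (M ^ N))))
      ≤ 1 * ν (pick ⁻¹' (K : Set (Fin (M ^ N)))) := mul_le_mul_left prob_le_one _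
    _ = ν (⋃ k ∈ K, C k) := by rw [one_mul, hpickK]
    _ ≤ ∑ k ∈ K, ν (C k) := measure_biUnion_finset_le K C
    _ ≤ ∑ _k ∈ K, ENNReal.ofReal (1 / (M ^ N : ℕ)) := Finset.sum_le_sum fun k _ => hCbound k
    _ = K.card * ENNReal.ofReal (1 / (M ^ N : ℕ)) := by
        rw [Finset.sum_const, nsmul_eq_mul]
    _ ≤ (M ^ (N - 1) : ℕ) * ENNReal.ofReal (1 / (M ^ N : ℕ)) := by
        apply mul_le_mul_left
        exact_mod_cast hcard
    _ = ENNReal.ofReal ((M ^ (N - 1) : ℕ) * (1 / (M ^ N : ℕ) : ℝ)) := by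
        rw [ENNReal.ofReal_mul (by positivity)]
        congr 1
        exact (ENNReal.ofReal_natCast _).symm
    _ = ENNReal.ofReal (1 / M) := by
        congr 1
        have hMR : (0 : ℝ) < (M : ℝ) := by exact_mod_cast hM
        have hpow : ((M ^ N : ℕ) : ℝ) = ((M ^ (N - 1) : ℕ) : ℝ) * (M : ℝ) := by
          push_cast
          rw [← pow_succ]
          congr 1
          omega
        rw [hpow]
        field_simp

end Aux

/-- **Code construction (peak power).** Let `λ ∈ (0,1/2)`, `Γ ≥ 0`, `P` non-discrete
with atom set `Ē`, and let `n ≥ 1` satisfy `P(Ē)^n ≤ λ/2`. If there is an `(n, M, λ/2)`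
deterministic message transmission feedback code for `W_P` with peak power constraint
`Γ` and `M > 2/λ`, then for every `N ≥ 1` there is a `(2n, N, λ, λ)` deterministic
identification feedback code for `W_P` with peak power constraint `Γ`. -/
theorem stmt11 (P : Measure ℝ) [IsProbabilityMeasure P]
    (lam Γ : ℝ) (hlam : lam ∈ Set.Ioo (0 : ℝ) (1 / 2)) (hΓ : 0 ≤ Γ)
    (Ebar : Set ℝ) (hEbar : Ebar = {x : ℝ | 0 < P {x}})
    (hnd : P Ebar < 1)
    (n : ℕ) (hn : 0 < n) (hnE : P Ebar ^ n ≤ ENNReal.ofReal (lam / 2))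
    (M : ℕ) (hM : 2 / lam < M)
    (hMT : ∃ (f : Fin M → FeedbackFn n) (D : Fin M → Set (Fin n → ℝ)),
      IsMTCodePeak P n M (lam / 2) Γ f D) :
    ∀ N : ℕ, 0 < N →
      ∃ (f : Fin N → FeedbackFn (2 * n)) (D : Fin N → Set (Fin (2 * n) → ℝ)),
        IsIDCodePeak P (2 * n) N lam lam Γ f D := by
  classical
  intro N hN
  obtain ⟨g, Dmt, hg1, hg2, hg3⟩ := hMT
  have hlam0 : 0 < lam := hlam.1
  have hMpos : 0 < M := by
    by_contra h
    push_neg at h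
    interval_cases M
    have h2 : (0 : ℝ) < 2 / lam := by positivity
    simp only [Nat.cast_zero] at hM
    linarith
  set μn : Measure (Fin n → ℝ) := Measure.pi fun _ : Fin n => P with hμn
  haveI : IsProbabilityMeasure μn := by rw [hμn]; infer_instance
  -- the atomic block
  have hEcount : Ebar.Countable := by
    rw [hEbar]
    have h := Measure.countable_meas_level_set_pos (μ := P) (measurable_id (α := ℝ))
    simpa [Set.setOf_eq_eq_singleton] using h
  have hEm : MeasurableSet Ebar := hEcount.measurableSet
  set A : Set (Fin n → ℝ) := Set.univ.pi (fun _ => Ebar) with hA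
  have hAm : MeasurableSet A := MeasurableSet.univ_pi fun _ => hEm
  have hAmeas : μn A = P Ebar ^ n := by
    rw [hA, hμn, Measure.pi_pi]
    simp
  have hS0 : ∀ z ∈ Aᶜ, μn {z} = 0 := by
    intro z hz
    have hzs : {z} = Set.univ.pi (fun t => {z t}) := by
      ext w
      simp [funext_iff, Set.mem_pi, eq_comm]
    rw [hzs, hμn, Measure.pi_pi]
    obtain ⟨t, ht⟩ : ∃ t, z t ∉ Ebar := by
      by_contra hcon
      push_neg at hcon
      exact hz (fun t _ => hcon t)
    refine Finset.prod_eq_zero (Finset.mem_univ t) ?_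
    rw [hEbar] at ht
    simpa using ht
  obtain ⟨T, hTmeas, hTcol⟩ := coloring P n hn Aᶜ hAm.compl hS0 N M hMpos
  -- the codes
  set f : Fin N → FeedbackFn (2 * n) := fun i => comb n M g (T i) with hf
  set D' : Fin N → Set ((Fin n → ℝ) × (Fin n → ℝ)) := fun j =>
    {p | p.1 ∈ Aᶜ ∧ p.2 ∈ Dmt (T j p.1)} with hD'
  have hD'meas : ∀ j, MeasurableSet (D' j) := by
    intro j
    have hrep : D' j = ⋃ k : Fin M, ((T j ⁻¹' {k}) ∩ Aᶜ) ×ˢ Dmt k := by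
      ext p
      simp only [hD', Set.mem_setOf_eq, Set.mem_iUnion, Set.mem_prod, Set.mem_inter_iff,
        Set.mem_preimage, Set.mem_singleton_iff]
      constructor
      · rintro ⟨h1, h2⟩; exact ⟨T j p.1, ⟨rfl, h1⟩, h2⟩
      · rintro ⟨k, ⟨hk, h1⟩, h2⟩; exact ⟨h1, by rwa [hk]⟩
    rw [hrep]
    exact MeasurableSet.iUnion fun k =>
      ((hTmeas j (measurableSet_singleton k)).inter hAm.compl).prod (hg1 k).2.2
  set D : Fin N → Set (Fin (2 * n) → ℝ) := fun j => splitFun n ⁻¹' (D' j) with hD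
  have hgMeas : ∀ k, (g k).Meas := fun k => (hg1 k).1
  -- bound on 1/M
  have hMR : (0 : ℝ) < (M : ℝ) := by exact_mod_cast hMpos
  have hMlam : (1 : ℝ) / M ≤ lam / 2 := by
    rw [div_le_div_iff₀ hMR two_pos]
    have h2 : 2 < (M : ℝ) * lam := by
      have := (div_lt_iff₀ hlam0).mp hM
      linarith
    linarith
  refine ⟨f, D, ⟨fun i => ⟨comb_meas hgMeas (hTmeas i),
    comb_peak (fun k => (hg1 k).2.1) hΓ (T i),
    (measurePreserving_splitFun n P).measurable (hD'meas i)⟩, ?_, ?_⟩⟩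
  · -- error of the first kind
    intro i
    have hrw : (D i)ᶜ = splitFun n ⁻¹' (D' i)ᶜ := by rw [hD, Set.preimage_compl]
    rw [hrw, Wn_comb_apply P hgMeas (hTmeas i) (hD'meas i).compl]
    have hpt : ∀ z1, μn {z2 | (z1, outSeq (g (T i z1)) z2) ∈ (D' i)ᶜ}
        ≤ A.indicator (fun _ => (1 : ENNReal)) z1 + ENNReal.ofReal (lam / 2) := by
      intro z1
      by_cases hz : z1 ∈ A
      · calc μn _ ≤ 1 := prob_le_one
          _ ≤ _ := by rw [Set.indicator_of_mem hz]; exact le_self_add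
      · have hseteq : {z2 | (z1, outSeq (g (T i z1)) z2) ∈ (D' i)ᶜ}
            = (outSeq (g (T i z1))) ⁻¹' (Dmt (T i z1))ᶜ := by
          ext z2
          simp [hD', hz]
        rw [hseteq, Set.indicator_of_notMem hz, zero_add]
        have hWn : μn ((outSeq (g (T i z1))) ⁻¹' (Dmt (T i z1))ᶜ)
            = Wn P (g (T i z1)) (Dmt (T i z1))ᶜ := by
          rw [Wn, Measure.map_apply (measurable_outSeq (hgMeas _)) (hg1 _).2.2.compl, hμn]
        rw [hWn]
        exact hg3 (T i z1)
    calc (∫⁻ z1, μn {z2 | (z1, outSeq (g (T i z1)) z2) ∈ (D' i)ᶜ} ∂μn)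
        ≤ ∫⁻ z1, (A.indicator (fun _ => (1 : ENNReal)) z1 + ENNReal.ofReal (lam / 2)) ∂μn :=
          lintegral_mono hpt
      _ = μn A + ENNReal.ofReal (lam / 2) := by
          rw [lintegral_add_right _ measurable_const, lintegral_indicator_const hAm,
            lintegral_const, measure_univ, mul_one, one_mul]
      _ ≤ ENNReal.ofReal (lam / 2) + ENNReal.ofReal (lam / 2) := by
          apply add_le_add_left
          rw [hAmeas]
          exact hnE
      _ = ENNReal.ofReal lam := by
          rw [← ENNReal.ofReal_add (by linarith) (by linarith)]
          congr 1
          linarith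
  · -- error of the second kind
    intro i j hij
    rw [hD, Wn_comb_apply P hgMeas (hTmeas i) (hD'meas j)]
    set col : Set (Fin n → ℝ) := Aᶜ ∩ {z | T i z = T j z} with hcol
    have hcolm : MeasurableSet col := by
      refine hAm.compl.inter ?_
      have : {z | T i z = T j z} = ⋃ k : Fin M, (T i ⁻¹' {k}) ∩ (T j ⁻¹' {k}) := by
        ext z
        simp only [Set.mem_setOf_eq, Set.mem_iUnion, Set.mem_inter_iff, Set.mem_preimage,
          Set.mem_singleton_iff]
        constructor
        · intro h; exact ⟨T i z, rfl, h.symm⟩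
        · rintro ⟨k, h1, h2⟩; rw [h1, h2]
      rw [this]
      exact MeasurableSet.iUnion fun k =>
        (hTmeas i (measurableSet_singleton k)).inter (hTmeas j (measurableSet_singleton k))
    have hpt : ∀ z1, μn {z2 | (z1, outSeq (g (T i z1)) z2) ∈ D' j}
        ≤ col.indicator (fun _ => (1 : ENNReal)) z1 + ENNReal.ofReal (lam / 2) := by
      intro z1
      by_cases hz : z1 ∈ A
      · have hempty : {z2 | (z1, outSeq (g (T i z1)) z2) ∈ D' j} = ∅ := by
          ext z2
          simp [hD', hz]
        rw [hempty]
        simp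
      · by_cases hTij : T i z1 = T j z1
        · have hmem : z1 ∈ col := ⟨hz, hTij⟩
          calc μn _ ≤ 1 := prob_le_one
            _ ≤ _ := by rw [Set.indicator_of_mem hmem]; exact le_self_add
        · have hseteq : {z2 | (z1, outSeq (g (T i z1)) z2) ∈ D' j}
              = (outSeq (g (T i z1))) ⁻¹' (Dmt (T j z1)) := by
            ext z2
            simp [hD', hz]
          have hnotmem : z1 ∉ col := fun h => hTij h.2
          rw [hseteq, Set.indicator_of_notMem hnotmem, zero_add]
          have hWn : μn ((outSeq (g (T i z1))) ⁻¹' (Dmt (T j z1)))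
              = Wn P (g (T i z1)) (Dmt (T j z1)) := by
            rw [Wn, Measure.map_apply (measurable_outSeq (hgMeas _)) (hg1 _).2.2, hμn]
          rw [hWn]
          calc Wn P (g (T i z1)) (Dmt (T j z1))
              ≤ Wn P (g (T i z1)) (Dmt (T i z1))ᶜ := by
                apply measure_mono
                intro w hw hcon
                exact Set.disjoint_left.mp (hg2 _ _ hTij) hcon hw
            _ ≤ ENNReal.ofReal (lam / 2) := hg3 (T i z1)
    calc (∫⁻ z1, μn {z2 | (z1, outSeq (g (T i z1)) z2) ∈ D' j} ∂μn)
        ≤ ∫⁻ z1, (col.indicator (fun _ => (1 : ENNReal)) z1 + ENNReal.ofReal (lam / 2)) ∂μn :=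
          lintegral_mono hpt
      _ = μn col + ENNReal.ofReal (lam / 2) := by
          rw [lintegral_add_right _ measurable_const, lintegral_indicator_const hcolm,
            lintegral_const, measure_univ, mul_one, one_mul]
      _ ≤ ENNReal.ofReal (1 / M) + ENNReal.ofReal (lam / 2) := by
          apply add_le_add_left
          exact hTcol i j hij
      _ ≤ ENNReal.ofReal lam := by
          rw [← ENNReal.ofReal_add (by positivity) (by linarith)]
          apply ENNReal.ofReal_le_ofReal
          linarith

end
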